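/- The MPW solution satisfies Sobolev consistency for TUX games: for every TUX game w on N and distinct players i, j ∈ N, MPW_i(w) = MPW_i( w_{−j}^{So,MPW} ), where w_{−j}^{So,MPW}(S,π) = (s/(n−1))( w(S∪{j},π) − MPW_j(w) ) + (1 − s/(n−1)) w_{−j}(S,π). -/

import Mathlib

open Finset BigOperators

namespace TUX

/-- A (raw) game in partition function form: assigns a real worth to each
coalition together with a partition (of the outside players). -/
abbrev Game := Finset ℕ → Finset (Finset ℕ) → ℝ

/-- A TU game (characteristic function). -/
abbrev TUGame := Finset ℕ → ℝ

/-- A solution for TUX games: given a player set and a game, assigns payoffs. -/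
abbrev Sol := Finset ℕ → Game → ℕ → ℝ

/-- `w` is a genuine TUX game: the empty coalition has worth 0. -/
def IsTUX (w : Game) : Prop := ∀ π, w ∅ π = 0

/-- `π` is a partition of the finite set `M`. -/
def IsPartition (M : Finset ℕ) (π : Finset (Finset ℕ)) : Prop :=
  (∀ B ∈ π, B ⊆ M) ∧ ∅ ∉ π ∧ ∀ x ∈ M, (π.filter (fun B => x ∈ B)).card = 1

instance (M : Finset ℕ) : DecidablePred (IsPartition M) := fun π => by
  unfold IsPartition; infer_instance

/-- The finite set of all partitions of `M`. -/
def partitionsOf (M : Finset ℕ) : Finset (Finset (Finset ℕ)) :=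
  (M.powerset.powerset).filter (IsPartition M)

/-- The Ewens(θ = 1) probability of the partition `π` of `M`:
`p*_M(π) = ∏_{B ∈ π} (|B| - 1)! / |M|!`. -/
noncomputable def pstar (M : Finset ℕ) (π : Finset (Finset ℕ)) : ℝ :=
  (∏ B ∈ π, ((B.card - 1).factorial : ℝ)) / (M.card.factorial : ℝ)

/-- The block of `π` containing `j` (junk if `π` is not a partition containing `j`). -/
def blockOf (π : Finset (Finset ℕ)) (j : ℕ) : Finset ℕ :=
  (π.filter (fun B => j ∈ B)).sup id

/-- Add player `i` to the block `B` of `π`. -/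
def addToBlock (π : Finset (Finset ℕ)) (i : ℕ) (B : Finset ℕ) : Finset (Finset ℕ) :=
  insert (insert i B) (π.erase B)

/-- The restriction operator `r⋆` removing a single player `i` from a game on `N`:
`w₋ᵢ(S,π) = (1/(n-s)) (w(S, π₊ᵢ⇝∅) + ∑_{j ∈ N∖(S∪{i})} w(S, π₊ᵢ⇝π(j)))`. -/
noncomputable def restrict1 (N : Finset ℕ) (w : Game) (i : ℕ) : Game :=
  fun S π =>
    ((N.card : ℝ) - (S.card : ℝ))⁻¹ *
      (w S (insert {i} π) + ∑ j ∈ (N \ S).erase i, w S (addToBlock π i (blockOf π j)))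

/-- Iterated removal of a list of players. -/
noncomputable def restrictL : Finset ℕ → Game → List ℕ → Game
  | _, w, [] => w
  | N, w, i :: l => restrictL (N.erase i) (restrict1 N w i) l

/-- Removal of a set of players (via the increasing enumeration; by path
independence of `r⋆` the order is immaterial). -/
noncomputable def restrictSet (N : Finset ℕ) (w : Game) (T : Finset ℕ) : Game :=
  restrictL N w (T.sort (· ≤ ·))

/-- The average TU game `v̄_w` of a TUX game `w` on `N`. -/
noncomputable def avg (N : Finset ℕ) (w : Game) : TUGame :=
  fun S => ∑ π ∈ partitionsOf (N \ S), pstar (N \ S) π * w S π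

/-- The auxiliary TU game `v*_w(S) = w₋(N∖S)(S,∅)`. -/
noncomputable def auxGame (N : Finset ℕ) (w : Game) : TUGame :=
  fun S => restrictSet N w (N \ S) S ∅

/-- The Shapley value of a TU game on player set `N`. -/
noncomputable def shapley (N : Finset ℕ) (v : TUGame) (i : ℕ) : ℝ :=
  ∑ S ∈ (N.erase i).powerset,
    (((S.card.factorial : ℝ) * ((N.card - S.card - 1).factorial : ℝ)) / (N.card.factorial : ℝ)) *
      (v (insert i S) - v S)

/-- The MPW solution: the Shapley value of the average game. -/
noncomputable def MPW (N : Finset ℕ) (w : Game) (i : ℕ) : ℝ := shapley N (avg N w) i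

/-- The MPW solution as a solution for TUX games. -/
noncomputable def MPWsol : Sol := fun N w i => MPW N w i

/-- The scaled Dirac TUX game `δ_{T,τ}` on `N`. -/
noncomputable def scaledDirac (N T : Finset ℕ) (τ : Finset (Finset ℕ)) : Game :=
  fun S π => if S = T ∧ π = τ then (pstar (N \ T) τ)⁻¹ else 0

/-- `τ₋S`: remove the players of `S` from each block of `τ`, discarding empty blocks. -/
def partRemove (τ : Finset (Finset ℕ)) (S : Finset ℕ) : Finset (Finset ℕ) :=
  (τ.image (fun B => B \ S)).erase ∅

/-- The Sobolev-reduced TUX game `w₋ⱼ^{So,φ}` on `N ∖ {j}`. -/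
noncomputable def sobRed (N : Finset ℕ) (φ : Sol) (w : Game) (j : ℕ) : Game :=
  fun S π =>
    ((S.card : ℝ) / ((N.card : ℝ) - 1)) * (w (insert j S) π - φ N w j) +
      (1 - (S.card : ℝ) / ((N.card : ℝ) - 1)) * restrict1 N w j S π

/-- The Hart–Mas-Colell reduced TUX game `w₋T^{HM,φ}` on `N ∖ T`. -/
noncomputable def hmRed (N : Finset ℕ) (φ : Sol) (w : Game) (T : Finset ℕ) : Game :=
  fun S π => w (S ∪ T) π - ∑ j ∈ T, φ (S ∪ T) (restrictSet N w (N \ (S ∪ T))) j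

/-- Efficiency for TUX games. -/
def EfficientX (φ : Sol) : Prop :=
  ∀ (N : Finset ℕ) (w : Game), IsTUX w → ∑ i ∈ N, φ N w i = w N ∅

/-- Balanced contributions for TUX games (w.r.t. the restriction operator `r⋆`). -/
def BalancedContributionsX (φ : Sol) : Prop :=
  ∀ (N : Finset ℕ) (w : Game), IsTUX w → ∀ i ∈ N, ∀ j ∈ N,
    φ N w i - φ (N.erase j) (restrict1 N w j) i
      = φ N w j - φ (N.erase i) (restrict1 N w i) j

/-- 2-standardness for TUX games. -/
def TwoStandardX (φ : Sol) : Prop :=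
  ∀ i j : ℕ, i ≠ j → ∀ w : Game, IsTUX w →
    φ {i, j} w i
      = w {i} {({j} : Finset ℕ)}
        + (w {i, j} ∅ - w {j} {({i} : Finset ℕ)} - w {i} {({j} : Finset ℕ)}) / 2

/-- Sobolev consistency for TUX games. -/
def SobolevConsistentX (φ : Sol) : Prop :=
  ∀ (N : Finset ℕ) (w : Game), IsTUX w → ∀ i ∈ N, ∀ j ∈ N, i ≠ j →
    φ N w i = φ (N.erase j) (sobRed N φ w j) i

/-- Hart–Mas-Colell consistency (single-player removal) for TUX games. -/
def HMConsistentX (φ : Sol) : Prop :=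
  ∀ (N : Finset ℕ) (w : Game), IsTUX w → ∀ i ∈ N, ∀ j ∈ N, i ≠ j →
    φ N w i = φ (N.erase j) (hmRed N φ w {j}) i

/-- Set Hart–Mas-Colell consistency (removal of a coalition) for TUX games. -/
def SetHMConsistentX (φ : Sol) : Prop :=
  ∀ (N : Finset ℕ) (w : Game), IsTUX w → ∀ i ∈ N, ∀ T ⊆ N.erase i,
    φ N w i = φ (N \ T) (hmRed N φ w T) i

/-- The finite set of embedded coalitions `(T,τ)` of `N` with `T ≠ ∅`. -/
def embeddedNE (N : Finset ℕ) : Finset (Finset ℕ × Finset (Finset ℕ)) :=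
  (N.powerset ×ˢ N.powerset.powerset).filter
    (fun p => p.1.Nonempty ∧ IsPartition (N \ p.1) p.2)

end TUX


namespace TUX

lemma mem_partitionsOf {M : Finset ℕ} {π : Finset (Finset ℕ)} :
    π ∈ partitionsOf M ↔ IsPartition M π := by
  simp only [partitionsOf, mem_filter, mem_powerset, and_iff_right_iff_imp]
  intro h
  intro B hB
  simp only [mem_powerset]
  exact h.1 B hB

lemma IsPartition.filter_eq {M : Finset ℕ} {π : Finset (Finset ℕ)} (h : IsPartition M π)
    {x : ℕ} (hx : x ∈ M) : π.filter (fun B => x ∈ B) = {blockOf π x} := by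
  obtain ⟨B, hB⟩ := Finset.card_eq_one.1 (h.2.2 x hx)
  rw [blockOf, hB]; simp

lemma IsPartition.blockOf_mem {M : Finset ℕ} {π : Finset (Finset ℕ)} (h : IsPartition M π)
    {x : ℕ} (hx : x ∈ M) : blockOf π x ∈ π ∧ x ∈ blockOf π x := by
  have := h.filter_eq hx
  have h2 : blockOf π x ∈ π.filter (fun B => x ∈ B) := by rw [this]; simp
  simpa using h2

lemma IsPartition.blockOf_eq {M : Finset ℕ} {π : Finset (Finset ℕ)} (h : IsPartition M π)
    {x : ℕ} {B : Finset ℕ} (hB : B ∈ π) (hx : x ∈ B) : blockOf π x = B := by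
  have hxM : x ∈ M := h.1 B hB hx
  have h2 : B ∈ π.filter (fun C => x ∈ C) := by simp [hB, hx]
  rw [h.filter_eq hxM] at h2
  exact (Finset.mem_singleton.1 h2).symm

lemma IsPartition.eq_of_mem {M : Finset ℕ} {π : Finset (Finset ℕ)} (h : IsPartition M π)
    {x : ℕ} {B C : Finset ℕ} (hB : B ∈ π) (hxB : x ∈ B) (hC : C ∈ π) (hxC : x ∈ C) : B = C := by
  rw [← h.blockOf_eq hB hxB, ← h.blockOf_eq hC hxC]

lemma IsPartition.not_mem_of_not_mem {M : Finset ℕ} {π : Finset (Finset ℕ)} (h : IsPartition M π)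
    {j : ℕ} (hj : j ∉ M) {B : Finset ℕ} (hB : B ∈ π) : j ∉ B :=
  fun hjB => hj (h.1 B hB hjB)

lemma not_mem_addblock {M' : Finset ℕ} {π : Finset (Finset ℕ)} (h : IsPartition M' π)
    {j : ℕ} (hj : j ∉ M') {B : Finset ℕ} : insert j B ∉ π :=
  fun hc => h.not_mem_of_not_mem hj hc (Finset.mem_insert_self j B)

lemma subset_of_mem_insert_empty {M' : Finset ℕ} {π : Finset (Finset ℕ)} (h : IsPartition M' π)
    {B : Finset ℕ} (hB : B ∈ insert ∅ π) : B ⊆ M' := by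
  rcases Finset.mem_insert.1 hB with rfl | hB
  · exact Finset.empty_subset _
  · exact h.1 B hB

lemma isPartition_addToBlock {M' : Finset ℕ} {π : Finset (Finset ℕ)} (h : IsPartition M' π)
    {j : ℕ} (hj : j ∉ M') {B : Finset ℕ} (hB : B ∈ insert ∅ π) :
    IsPartition (insert j M') (addToBlock π j B) := by
  have hBM : B ⊆ M' := subset_of_mem_insert_empty h hB
  have hjB : j ∉ B := fun hc => hj (hBM hc)
  refine ⟨?_, ?_, ?_⟩
  · intro C hC
    rcases Finset.mem_insert.1 hC with rfl | hC
    · exact Finset.insert_subset_insert j hBM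
    · exact (h.1 C (Finset.mem_of_mem_erase hC)).trans (Finset.subset_insert j M')
  · intro hc
    rcases Finset.mem_insert.1 hc with hc | hc
    · exact (Finset.insert_ne_empty j B) hc.symm
    · exact h.2.1 (Finset.mem_of_mem_erase hc)
  · intro x hx
    rcases Finset.mem_insert.1 hx with rfl | hxM
    · -- x = j
      have : (addToBlock π x B).filter (fun C => x ∈ C) = {insert x B} := by
        ext C
        simp only [Finset.mem_filter, Finset.mem_singleton, addToBlock, Finset.mem_insert]
        constructor
        · rintro ⟨hC | hC, hxC⟩
          · exact hC
          · exact absurd (h.1 C (Finset.mem_of_mem_erase hC) hxC) hj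
        · rintro rfl; exact ⟨Or.inl rfl, Finset.mem_insert_self x B⟩
      rw [this, Finset.card_singleton]
    · by_cases hxB : x ∈ B
      · have hBπ : B ∈ π := by
          rcases Finset.mem_insert.1 hB with rfl | hB
          · exact absurd hxB (Finset.notMem_empty x)
          · exact hB
        have : (addToBlock π j B).filter (fun C => x ∈ C) = {insert j B} := by
          ext C
          simp only [Finset.mem_filter, Finset.mem_singleton, addToBlock, Finset.mem_insert]
          constructor
          · rintro ⟨hC | hC, hxC⟩
            · exact hC
            · exact absurd (h.eq_of_mem (Finset.mem_of_mem_erase hC) hxC hBπ hxB)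
                (Finset.ne_of_mem_erase hC)
          · rintro rfl; exact ⟨Or.inl rfl, Finset.mem_insert_of_mem hxB⟩
        rw [this, Finset.card_singleton]
      · have hbo := h.blockOf_mem hxM
        have hne : blockOf π x ≠ B := fun hc => hxB (hc ▸ hbo.2)
        have : (addToBlock π j B).filter (fun C => x ∈ C) = {blockOf π x} := by
          ext C
          simp only [Finset.mem_filter, Finset.mem_singleton, addToBlock, Finset.mem_insert]
          constructor
          · rintro ⟨hC | hC, hxC⟩
            · subst hC
              rcases Finset.mem_insert.1 hxC with rfl | hxC
              · exact absurd hxM hj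
              · exact absurd hxC hxB
            · exact h.blockOf_eq (Finset.mem_of_mem_erase hC) hxC ▸ rfl
          · rintro rfl
            exact ⟨Or.inr (Finset.mem_erase.2 ⟨hne, hbo.1⟩), hbo.2⟩
        rw [this, Finset.card_singleton]

lemma addToBlock_empty {π : Finset (Finset ℕ)} (h : ∅ ∉ π) (j : ℕ) :
    addToBlock π j ∅ = insert {j} π := by
  simp [addToBlock, Finset.erase_eq_of_notMem h]

/-- The structural decomposition of partitions of `insert j M'` according to where `j` sits. -/

lemma sum_partitions_insert {M' : Finset ℕ} {j : ℕ} (hj : j ∉ M') (g : Finset (Finset ℕ) → ℝ) :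
    ∑ π' ∈ partitionsOf (insert j M'), g π' =
      ∑ π ∈ partitionsOf M', ∑ B ∈ insert ∅ π, g (addToBlock π j B) := by
  rw [Finset.sum_sigma' (partitionsOf M') (fun π => insert ∅ π)
    (fun π B => g (addToBlock π j B))]
  refine (Finset.sum_bij' (fun p _ => addToBlock p.1 j p.2)
    (fun π' _ => ⟨(insert ((blockOf π' j).erase j) (π'.erase (blockOf π' j))).erase ∅,
      (blockOf π' j).erase j⟩) ?_ ?_ ?_ ?_ ?_).symm
  · -- forward maps into partitions of insert j M'
    rintro ⟨π, B⟩ hp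
    rw [Finset.mem_sigma] at hp
    exact mem_partitionsOf.2 (isPartition_addToBlock (mem_partitionsOf.1 hp.1) hj hp.2)
  · -- backward maps into sigma
    intro π' hπ'
    have h := mem_partitionsOf.1 hπ'
    have hjmem : j ∈ insert j M' := Finset.mem_insert_self j M'
    obtain ⟨hB'mem, hjB'⟩ := h.blockOf_mem hjmem
    set B' := blockOf π' j with hB'
    set B := B'.erase j with hBdef
    rw [Finset.mem_sigma]
    have hBne : B ∉ π'.erase B' := by
      intro hc
      have hcB : B ∈ π' := Finset.mem_of_mem_erase hc
      have hBneB' : B ≠ B' := Finset.ne_of_mem_erase hc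
      have hBnonempty : B.Nonempty := Finset.nonempty_iff_ne_empty.2 (fun hc2 => h.2.1 (hc2 ▸ hcB))
      obtain ⟨x, hxB⟩ := hBnonempty
      exact hBneB' (h.eq_of_mem hcB hxB hB'mem (Finset.mem_of_mem_erase hxB))
    constructor
    · -- πb is a partition of M'
      apply mem_partitionsOf.2
      refine ⟨?_, ?_, ?_⟩
      · intro C hC
        have hC' := Finset.mem_of_mem_erase hC
        have hCne : C ≠ ∅ := Finset.ne_of_mem_erase hC
        rcases Finset.mem_insert.1 hC' with rfl | hC'
        · intro x hx
          have hx2 : x ∈ B' := Finset.mem_of_mem_erase hx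
          have := h.1 B' hB'mem hx2
          rcases Finset.mem_insert.1 this with rfl | hxM
          · exact absurd rfl (Finset.ne_of_mem_erase hx)
          · exact hxM
        · intro x hx
          have hCmem : C ∈ π' := Finset.mem_of_mem_erase hC'
          have := h.1 C hCmem hx
          rcases Finset.mem_insert.1 this with rfl | hxM
          · exact absurd (h.eq_of_mem hCmem hx hB'mem hjB') (Finset.ne_of_mem_erase hC')
          · exact hxM
      · exact Finset.notMem_erase ∅ _
      · intro x hxM
        have hxM2 : x ∈ insert j M' := Finset.mem_insert_of_mem hxM
        have hxj : x ≠ j := fun hc => hj (hc ▸ hxM)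
        obtain ⟨hCx, hxCx⟩ := h.blockOf_mem hxM2
        set Cx := blockOf π' x with hCxdef
        by_cases hxB' : x ∈ B'
        · have hCeq : Cx = B' := h.eq_of_mem hCx hxCx hB'mem hxB'
          have hxB : x ∈ B := Finset.mem_erase.2 ⟨hxj, hxB'⟩
          have hBne' : B ≠ ∅ := fun hc => by simp [hc] at hxB
          have : ((insert B (π'.erase B')).erase ∅).filter (fun C => x ∈ C) = {B} := by
            ext C
            simp only [Finset.mem_filter, Finset.mem_singleton, Finset.mem_erase,
              Finset.mem_insert]
            constructor
            · rintro ⟨⟨hCne, hC | hC⟩, hxC⟩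
              · exact hC
              · exact absurd (h.eq_of_mem hC.2 hxC hB'mem hxB') hC.1
            · rintro rfl; exact ⟨⟨hBne', Or.inl rfl⟩, hxB⟩
          rw [this, Finset.card_singleton]
        · have hCne : Cx ≠ B' := fun hc => hxB' (hc ▸ hxCx)
          have hxB : x ∉ B := fun hc => hxB' (Finset.mem_of_mem_erase hc)
          have : ((insert B (π'.erase B')).erase ∅).filter (fun C => x ∈ C) = {Cx} := by
            ext C
            simp only [Finset.mem_filter, Finset.mem_singleton, Finset.mem_erase,
              Finset.mem_insert]
            constructor
            · rintro ⟨⟨hCne2, hC | hC⟩, hxC⟩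
              · exact absurd (hC ▸ hxC) hxB
              · exact h.eq_of_mem hC.2 hxC hCx hxCx
            · rintro rfl
              refine ⟨⟨fun hc => by simp [hc] at hxCx, Or.inr ⟨hCne, hCx⟩⟩, hxCx⟩
          rw [this, Finset.card_singleton]
    · -- B ∈ insert ∅ πb
      by_cases hBe : B = ∅
      · exact Finset.mem_insert.2 (Or.inl hBe)
      · apply Finset.mem_insert_of_mem
        exact Finset.mem_erase.2 ⟨hBe, Finset.mem_insert_self B _⟩
  · -- left inverse
    rintro ⟨π, B⟩ hp
    rw [Finset.mem_sigma] at hp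
    have hπ := mem_partitionsOf.1 hp.1
    have hBM : B ⊆ M' := subset_of_mem_insert_empty hπ hp.2
    have hjB : j ∉ B := fun hc => hj (hBM hc)
    have hpart := isPartition_addToBlock hπ hj hp.2
    have hbo : blockOf (addToBlock π j B) j = insert j B :=
      hpart.blockOf_eq (Finset.mem_insert_self _ _) (Finset.mem_insert_self j B)
    have hBn : insert j B ∉ π.erase B := fun hc => not_mem_addblock hπ hj (Finset.mem_of_mem_erase hc)
    have he1 : (addToBlock π j B).erase (insert j B) = π.erase B := by
      rw [addToBlock, Finset.erase_insert hBn]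
    have he2 : (insert j B).erase j = B := Finset.erase_insert hjB
    have he3 : (insert B (π.erase B)).erase ∅ = π := by
      rcases Finset.mem_insert.1 hp.2 with rfl | hBπ
      · rw [Finset.erase_eq_of_notMem hπ.2.1, Finset.erase_insert hπ.2.1]
      · rw [Finset.insert_erase hBπ, Finset.erase_eq_of_notMem hπ.2.1]
    simp only [hbo, he1, he2, he3]
  · -- right inverse
    intro π' hπ'
    have h := mem_partitionsOf.1 hπ'
    obtain ⟨hB'mem, hjB'⟩ := h.blockOf_mem (Finset.mem_insert_self j M')
    set B' := blockOf π' j with hB'def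
    have hins : insert j (B'.erase j) = B' := Finset.insert_erase hjB'
    have hBne : B'.erase j ∉ π'.erase B' := by
      intro hc
      have hcB : B'.erase j ∈ π' := Finset.mem_of_mem_erase hc
      have hBnonempty : (B'.erase j).Nonempty :=
        Finset.nonempty_iff_ne_empty.2 (fun hc2 => h.2.1 (hc2 ▸ hcB))
      obtain ⟨x, hxB⟩ := hBnonempty
      exact (Finset.ne_of_mem_erase hc)
        (h.eq_of_mem hcB hxB hB'mem (Finset.mem_of_mem_erase hxB))
    show addToBlock ((insert (B'.erase j) (π'.erase B')).erase ∅) j (B'.erase j) = π'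
    rw [addToBlock]
    rw [hins]
    by_cases hBe : B'.erase j = ∅
    · rw [hBe] at hBne ⊢
      rw [Finset.erase_insert hBne,
        Finset.erase_eq_of_notMem (fun hc => h.2.1 (Finset.mem_of_mem_erase hc))]
      exact Finset.insert_erase hB'mem
    · have h1 : (insert (B'.erase j) (π'.erase B')).erase ∅ = insert (B'.erase j) (π'.erase B') := by
        apply Finset.erase_eq_of_notMem
        intro hc
        rcases Finset.mem_insert.1 hc with hc | hc
        · exact hBe hc.symm
        · exact h.2.1 (Finset.mem_of_mem_erase hc)
      rw [h1, Finset.erase_insert hBne]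
      exact Finset.insert_erase hB'mem
  · intro p hp; rfl

lemma pstar_addToBlock {M' : Finset ℕ} {π : Finset (Finset ℕ)} (h : IsPartition M' π)
    {j : ℕ} (hj : j ∉ M') {B : Finset ℕ} (hB : B ∈ insert ∅ π) :
    pstar (insert j M') (addToBlock π j B) =
      (if B = ∅ then 1 else (B.card : ℝ)) / ((M'.card : ℝ) + 1) * pstar M' π := by
  have hBM : B ⊆ M' := subset_of_mem_insert_empty h hB
  have hjB : j ∉ B := fun hc => hj (hBM hc)
  have hBn : insert j B ∉ π.erase B :=
    fun hc => not_mem_addblock h hj (Finset.mem_of_mem_erase hc)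
  have hcard : (insert j M').card = M'.card + 1 := Finset.card_insert_of_notMem hj
  have hjBcard : (insert j B).card = B.card + 1 := Finset.card_insert_of_notMem hjB
  rw [pstar, pstar, addToBlock, Finset.prod_insert hBn, hcard, hjBcard, Nat.factorial_succ]
  rcases Finset.mem_insert.1 hB with rfl | hBπ
  · rw [Finset.erase_eq_of_notMem h.2.1]
    simp only [Finset.card_empty, if_pos rfl]
    push_cast
    field_simp
    simp
  · have hBne : B ≠ ∅ := fun hc => h.2.1 (hc ▸ hBπ)
    have hBpos : 1 ≤ B.card := Finset.card_pos.2 (Finset.nonempty_iff_ne_empty.2 hBne)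
    have hfac : (B.card + 1 - 1).factorial = B.card * (B.card - 1).factorial := by
      have : B.card = (B.card - 1) + 1 := (Nat.succ_pred_eq_of_pos hBpos).symm
      rw [Nat.add_sub_cancel]
      calc B.card.factorial = ((B.card - 1) + 1).factorial := by rw [← this]
        _ = ((B.card - 1) + 1) * (B.card - 1).factorial := Nat.factorial_succ _
        _ = B.card * (B.card - 1).factorial := by rw [← this]
    have hprod : ∏ C ∈ π, ((C.card - 1).factorial : ℝ) =
        ((B.card - 1).factorial : ℝ) * ∏ C ∈ π.erase B, ((C.card - 1).factorial : ℝ) :=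
      (Finset.mul_prod_erase π _ hBπ).symm
    rw [if_neg hBne, hfac, hprod]
    push_cast
    have h1 : (M'.card.factorial : ℝ) ≠ 0 := Nat.cast_ne_zero.2 (Nat.factorial_ne_zero _)
    have h2 : ((M'.card : ℝ) + 1) ≠ 0 := by positivity
    field_simp

lemma sum_blockOf {M' : Finset ℕ} {π : Finset (Finset ℕ)} (h : IsPartition M' π)
    (f : Finset ℕ → ℝ) :
    ∑ k ∈ M', f (blockOf π k) = ∑ B ∈ π, (B.card : ℝ) * f B := by
  have step : ∀ k ∈ M', f (blockOf π k) = ∑ B ∈ π, if k ∈ B then f B else 0 := by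
    intro k hk
    rw [← Finset.sum_filter, h.filter_eq hk, Finset.sum_singleton]
  rw [Finset.sum_congr rfl step, Finset.sum_comm]
  refine Finset.sum_congr rfl (fun B hB => ?_)
  rw [Finset.sum_ite_mem, Finset.inter_eq_right.2 (h.1 B hB), Finset.sum_const,
    nsmul_eq_mul]

lemma sum_card_blocks {M' : Finset ℕ} {π : Finset (Finset ℕ)} (h : IsPartition M' π) :
    ∑ B ∈ π, (B.card : ℝ) = M'.card := by
  have := sum_blockOf h (fun _ => (1 : ℝ))
  simpa using this.symm

lemma partitionsOf_empty : partitionsOf ∅ = {∅} := by decide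

lemma sum_pstar (M : Finset ℕ) : ∑ π ∈ partitionsOf M, pstar M π = 1 := by
  induction M using Finset.induction_on with
  | empty => rw [partitionsOf_empty]; simp [pstar]
  | @insert j M' hj ih =>
    rw [sum_partitions_insert hj]
    have : ∀ π ∈ partitionsOf M', ∑ B ∈ insert ∅ π, pstar (insert j M') (addToBlock π j B)
        = pstar M' π := by
      intro π hπ
      have h := mem_partitionsOf.1 hπ
      rw [Finset.sum_congr rfl (fun B hB => pstar_addToBlock h hj hB),
        ← Finset.sum_mul, ← Finset.sum_div]
      rw [Finset.sum_insert h.2.1, if_pos rfl]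
      have : ∑ B ∈ π, (if B = ∅ then (1:ℝ) else B.card) = ∑ B ∈ π, (B.card : ℝ) := by
        refine Finset.sum_congr rfl (fun B hB => if_neg (fun hc => h.2.1 ?_))
        rwa [hc] at hB
      rw [this, sum_card_blocks h]
      have h2 : ((M'.card : ℝ) + 1) ≠ 0 := by positivity
      field_simp
      ring
    rw [Finset.sum_congr rfl this, ih]

lemma sdiff_aux {N S : Finset ℕ} {j : ℕ} :
    (N.erase j) \ S = (N \ S).erase j := by
  ext x; simp only [Finset.mem_sdiff, Finset.mem_erase]; tauto

lemma sdiff_insert_aux {N S : Finset ℕ} {j : ℕ} :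
    N \ (insert j S) = (N.erase j) \ S := by
  ext x; simp only [Finset.mem_sdiff, Finset.mem_erase, Finset.mem_insert]; tauto

lemma avg_restrict1 {N : Finset ℕ} {w : Game} {j : ℕ} (hjN : j ∈ N) {S : Finset ℕ}
    (hS : S ⊆ N) (hjS : j ∉ S) :
    avg (N.erase j) (restrict1 N w j) S = avg N w S := by
  set M' := (N.erase j) \ S with hM'def
  have hjM' : j ∉ M' := by simp [hM'def]
  have hins : insert j M' = N \ S := by
    rw [hM'def, sdiff_aux]
    exact Finset.insert_erase (Finset.mem_sdiff.2 ⟨hjN, hjS⟩)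
  have hcard : ((N.card : ℝ) - S.card) = (M'.card : ℝ) + 1 := by
    have h1 : (insert j M').card = M'.card + 1 := Finset.card_insert_of_notMem hjM'
    have h2 : (N \ S).card = N.card - S.card := Finset.card_sdiff_of_subset hS
    have h3 : S.card ≤ N.card := Finset.card_le_card hS
    rw [hins] at h1
    rw [h2] at h1
    have : (N.card : ℝ) - S.card = ((N.card - S.card : ℕ) : ℝ) := by
      rw [Nat.cast_sub h3]
    rw [this, h1]
    push_cast; ring
  have key : ∀ π ∈ partitionsOf M',
      pstar M' π * restrict1 N w j S π =
        ∑ B ∈ insert ∅ π, pstar (insert j M') (addToBlock π j B) * w S (addToBlock π j B) := by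
    intro π hπ
    have h := mem_partitionsOf.1 hπ
    have hRHS : ∑ B ∈ insert ∅ π, pstar (insert j M') (addToBlock π j B) * w S (addToBlock π j B)
        = ((M'.card : ℝ) + 1)⁻¹ * pstar M' π *
          (w S (addToBlock π j ∅) + ∑ B ∈ π, (B.card : ℝ) * w S (addToBlock π j B)) := by
      rw [Finset.sum_congr rfl (fun B hB => by rw [pstar_addToBlock h hjM' hB])]
      rw [Finset.sum_insert h.2.1, if_pos rfl]
      have : ∀ B ∈ π, (if B = ∅ then (1:ℝ) else B.card) / ((M'.card : ℝ) + 1) * pstar M' π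
          * w S (addToBlock π j B)
          = ((M'.card : ℝ) + 1)⁻¹ * pstar M' π * ((B.card : ℝ) * w S (addToBlock π j B)) := by
        intro B hB
        rw [if_neg (fun hc => h.2.1 (by rwa [hc] at hB))]
        ring
      rw [Finset.sum_congr rfl this, ← Finset.mul_sum]
      ring
    rw [hRHS, restrict1, hcard]
    have h2 : (N \ S).erase j = M' := by rw [← sdiff_aux]
    rw [h2, sum_blockOf h (fun B => w S (addToBlock π j B)),
      addToBlock_empty h.2.1]
    ring
  calc avg (N.erase j) (restrict1 N w j) S
      = ∑ π ∈ partitionsOf M', pstar M' π * restrict1 N w j S π := rfl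
    _ = ∑ π ∈ partitionsOf M', ∑ B ∈ insert ∅ π,
          pstar (insert j M') (addToBlock π j B) * w S (addToBlock π j B) :=
        Finset.sum_congr rfl key
    _ = ∑ π' ∈ partitionsOf (insert j M'), pstar (insert j M') π' * w S π' :=
        (sum_partitions_insert hjM' (fun π' => pstar (insert j M') π' * w S π')).symm
    _ = avg N w S := by rw [hins]; rfl

lemma avg_sobRed {N : Finset ℕ} {w : Game} {j : ℕ} (hjN : j ∈ N) {S : Finset ℕ}
    (hS : S ⊆ N.erase j) :
    avg (N.erase j) (sobRed N MPWsol w j) S =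
      ((S.card : ℝ) / ((N.card : ℝ) - 1)) * (avg N w (insert j S) - MPW N w j) +
        (1 - (S.card : ℝ) / ((N.card : ℝ) - 1)) * avg N w S := by
  have hSN : S ⊆ N := hS.trans (Finset.erase_subset j N)
  have hjS : j ∉ S := fun hc => (Finset.mem_erase.1 (hS hc)).1 rfl
  set a := (S.card : ℝ) / ((N.card : ℝ) - 1) with ha
  have expand : avg (N.erase j) (sobRed N MPWsol w j) S =
      a * ((∑ π ∈ partitionsOf ((N.erase j) \ S), pstar ((N.erase j) \ S) π * w (insert j S) π)
        - (∑ π ∈ partitionsOf ((N.erase j) \ S), pstar ((N.erase j) \ S) π) * MPW N w j)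
      + (1 - a) * avg (N.erase j) (restrict1 N w j) S := by
    show (∑ π ∈ partitionsOf ((N.erase j) \ S), pstar ((N.erase j) \ S) π *
      (a * (w (insert j S) π - MPWsol N w j) + (1 - a) * restrict1 N w j S π)) = _
    rw [Finset.sum_congr rfl (fun π _ => by rw [show MPWsol N w j = MPW N w j from rfl]; ring :
      ∀ π ∈ partitionsOf ((N.erase j) \ S), pstar ((N.erase j) \ S) π *
      (a * (w (insert j S) π - MPWsol N w j) + (1 - a) * restrict1 N w j S π) =
      a * (pstar ((N.erase j) \ S) π * w (insert j S) π - pstar ((N.erase j) \ S) π * MPW N w j)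
      + (1 - a) * (pstar ((N.erase j) \ S) π * restrict1 N w j S π))]
    rw [Finset.sum_add_distrib, ← Finset.mul_sum, ← Finset.mul_sum, Finset.sum_sub_distrib,
      ← Finset.sum_mul]
    rfl
  rw [expand, sum_pstar, avg_restrict1 hjN hSN hjS]
  have : (∑ π ∈ partitionsOf ((N.erase j) \ S), pstar ((N.erase j) \ S) π * w (insert j S) π)
      = avg N w (insert j S) := by
    rw [avg, sdiff_insert_aux]
  rw [this]
  ring

lemma keyIdentity (s t A B C Vij Vi Vj V : ℝ) (hA : A ≠ 0) (hB : B ≠ 0) (hC : C ≠ 0)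
    (hs : 0 ≤ s) (ht : 0 ≤ t) :
    (A * ((t+1)*B))/((s+t+2)*((s+t+1)*C)) * (Vi - V)
      + (((s+1)*A) * B)/((s+t+2)*((s+t+1)*C)) * (Vij - Vj)
    = (A*B)/((s+t+1)*C) * ( ((s+1)/(s+t+1)) * Vij + (1 - (s+1)/(s+t+1)) * Vi
        - (s/(s+t+1)) * Vj - (1 - s/(s+t+1)) * V )
      - (1/(s+t+1)) * ( (A * ((t+1)*B))/((s+t+2)*((s+t+1)*C)) * (Vj - V)
        + (((s+1)*A)*B)/((s+t+2)*((s+t+1)*C)) * (Vij - Vi) ) := by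
  have h1 : s + t + 1 ≠ 0 := by positivity
  have h2 : s + t + 2 ≠ 0 := by positivity
  field_simp
  ring

lemma sum_cprime (E : Finset ℕ) :
    ∑ S ∈ E.powerset, ((S.card.factorial : ℝ) * (((E.card - S.card).factorial : ℕ) : ℝ))
      / (((E.card + 1).factorial : ℕ) : ℝ) = 1 := by
  rw [Finset.sum_powerset]
  have inner : ∀ k ∈ Finset.range (E.card + 1),
      ∑ S ∈ Finset.powersetCard k E,
        ((S.card.factorial : ℝ) * (((E.card - S.card).factorial : ℕ) : ℝ))
          / (((E.card + 1).factorial : ℕ) : ℝ)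
      = (E.card.factorial : ℝ) / ((E.card+1).factorial : ℝ) := by
    intro k hk
    have hk' : k ≤ E.card := Nat.lt_succ_iff.1 (Finset.mem_range.1 hk)
    have step : ∀ S ∈ Finset.powersetCard k E,
        ((S.card.factorial : ℝ) * (((E.card - S.card).factorial : ℕ) : ℝ))
          / (((E.card + 1).factorial : ℕ) : ℝ)
        = ((k.factorial : ℝ) * ((E.card - k).factorial : ℝ)) / (((E.card+1).factorial : ℕ) : ℝ) := by
      intro S hS; rw [(Finset.mem_powersetCard.1 hS).2]
    rw [Finset.sum_congr rfl step, Finset.sum_const, Finset.card_powersetCard, nsmul_eq_mul]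
    have hch : (E.card.choose k) * k.factorial * (E.card - k).factorial = E.card.factorial :=
      Nat.choose_mul_factorial_mul_factorial hk'
    have hcast : ((E.card.choose k : ℝ)) * ((k.factorial : ℝ) * ((E.card - k).factorial : ℝ))
        = (E.card.factorial : ℝ) := by
      rw [← hch]; push_cast; ring
    rw [← hcast]; ring
  rw [Finset.sum_congr rfl inner, Finset.sum_const, Finset.card_range, nsmul_eq_mul,
    Nat.factorial_succ]
  have h1 : (E.card.factorial : ℝ) ≠ 0 := Nat.cast_ne_zero.2 (Nat.factorial_ne_zero _)
  have h2 : ((E.card : ℝ) + 1) ≠ 0 := by positivity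
  push_cast
  field_simp

lemma shapley_consistent (N : Finset ℕ) (v vr : TUGame) (i j : ℕ)
    (hi : i ∈ N) (hj : j ∈ N) (hij : i ≠ j)
    (hvr : ∀ S ⊆ N.erase j, vr S =
      ((S.card : ℝ) / ((N.card : ℝ) - 1)) * (v (insert j S) - shapley N v j)
        + (1 - (S.card : ℝ) / ((N.card : ℝ) - 1)) * v S) :
    shapley N v i = shapley (N.erase j) vr i := by
  classical
  set E := (N.erase i).erase j with hE
  have hjE : j ∉ E := Finset.notMem_erase j _
  have hiE : i ∉ E := fun hc => (Finset.mem_erase.1 (Finset.mem_of_mem_erase hc)).1 rfl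
  have hNi : N.erase i = insert j E :=
    (Finset.insert_erase (Finset.mem_erase.2 ⟨hij.symm, hj⟩)).symm
  have hEj : (N.erase j).erase i = E := by rw [hE, Finset.erase_right_comm]
  have hNj : N.erase j = insert i E := by
    rw [← hEj]
    exact (Finset.insert_erase (Finset.mem_erase.2 ⟨hij, hi⟩)).symm
  have hNcard : N.card = E.card + 2 := by
    have h1 : (N.erase i).card = E.card + 1 := by
      rw [hNi, Finset.card_insert_of_notMem hjE]
    have h2 : (N.erase i).card = N.card - 1 := Finset.card_erase_of_mem hi
    have h3 : 1 ≤ N.card := Finset.card_pos.2 ⟨i, hi⟩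
    omega
  have hNjcard : (N.erase j).card = E.card + 1 := by
    rw [hNj, Finset.card_insert_of_notMem hiE]
  have hn1 : (N.card : ℝ) - 1 = (E.card : ℝ) + 1 := by rw [hNcard]; push_cast; ring
  set Shj := shapley N v j with hShj
  -- expansion of shapley N v i
  have hL : shapley N v i =
      ∑ S ∈ E.powerset,
        ( ((S.card.factorial : ℝ) * (((E.card + 1 - S.card).factorial : ℕ) : ℝ))
            / (((E.card + 2).factorial : ℕ) : ℝ) * (v (insert i S) - v S)
        + (((S.card + 1).factorial : ℝ) * (((E.card - S.card).factorial : ℕ) : ℝ))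
            / (((E.card + 2).factorial : ℕ) : ℝ)
            * (v (insert j (insert i S)) - v (insert j S)) ) := by
    rw [shapley, hNi, Finset.sum_powerset_insert hjE, ← Finset.sum_add_distrib]
    refine Finset.sum_congr rfl (fun S hS => ?_)
    have hSE : S ⊆ E := Finset.mem_powerset.1 hS
    have hScard : S.card ≤ E.card := Finset.card_le_card hSE
    have hjS : j ∉ S := fun hc => hjE (hSE hc)
    have hjcard : (insert j S).card = S.card + 1 := Finset.card_insert_of_notMem hjS
    have e1 : N.card - S.card - 1 = E.card + 1 - S.card := by omega
    have e2 : N.card - (insert j S).card - 1 = E.card - S.card := by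
      rw [hjcard]; omega
    rw [e1, e2, hjcard, hNcard, Finset.insert_comm]
  -- expansion of shapley N v j
  have hJ : Shj =
      ∑ S ∈ E.powerset,
        ( ((S.card.factorial : ℝ) * (((E.card + 1 - S.card).factorial : ℕ) : ℝ))
            / (((E.card + 2).factorial : ℕ) : ℝ) * (v (insert j S) - v S)
        + (((S.card + 1).factorial : ℝ) * (((E.card - S.card).factorial : ℕ) : ℝ))
            / (((E.card + 2).factorial : ℕ) : ℝ)
            * (v (insert j (insert i S)) - v (insert i S)) ) := by
    rw [hShj, shapley, hNj, Finset.sum_powerset_insert hiE, ← Finset.sum_add_distrib]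
    refine Finset.sum_congr rfl (fun S hS => ?_)
    have hSE : S ⊆ E := Finset.mem_powerset.1 hS
    have hScard : S.card ≤ E.card := Finset.card_le_card hSE
    have hiS : i ∉ S := fun hc => hiE (hSE hc)
    have hicard : (insert i S).card = S.card + 1 := Finset.card_insert_of_notMem hiS
    have e1 : N.card - S.card - 1 = E.card + 1 - S.card := by omega
    have e2 : N.card - (insert i S).card - 1 = E.card - S.card := by
      rw [hicard]; omega
    rw [e1, e2, hicard, hNcard]
  -- expansion of shapley (N.erase j) vr i
  have hR : shapley (N.erase j) vr i =
      ∑ S ∈ E.powerset,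
        ((S.card.factorial : ℝ) * (((E.card - S.card).factorial : ℕ) : ℝ))
            / (((E.card + 1).factorial : ℕ) : ℝ) *
          ( ( (((S.card : ℝ) + 1) / ((E.card : ℝ) + 1)) * (v (insert j (insert i S)) - Shj)
              + (1 - ((S.card : ℝ) + 1) / ((E.card : ℝ) + 1)) * v (insert i S) )
            - ( ((S.card : ℝ) / ((E.card : ℝ) + 1)) * (v (insert j S) - Shj)
              + (1 - (S.card : ℝ) / ((E.card : ℝ) + 1)) * v S ) ) := by
    rw [shapley, hEj, hNjcard]
    refine Finset.sum_congr rfl (fun S hS => ?_)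
    have hSE : S ⊆ E := Finset.mem_powerset.1 hS
    have hScard : S.card ≤ E.card := Finset.card_le_card hSE
    have hiS : i ∉ S := fun hc => hiE (hSE hc)
    have hicard : (insert i S).card = S.card + 1 := Finset.card_insert_of_notMem hiS
    have hSsub : S ⊆ N.erase j := by rw [hNj]; exact hSE.trans (Finset.subset_insert i E)
    have hiSsub : insert i S ⊆ N.erase j := by
      rw [hNj]; exact Finset.insert_subset_insert i hSE
    have e1 : E.card + 1 - S.card - 1 = E.card - S.card := by omega
    rw [e1, hvr _ hiSsub, hvr _ hSsub, hicard, hn1]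
    push_cast
    ring
  rw [hL, hR]
  -- peel off the Shapley-value correction term
  have step1 : ∀ S ∈ E.powerset,
      ((S.card.factorial : ℝ) * (((E.card - S.card).factorial : ℕ) : ℝ))
          / (((E.card + 1).factorial : ℕ) : ℝ) *
        ( ( (((S.card : ℝ) + 1) / ((E.card : ℝ) + 1)) * (v (insert j (insert i S)) - Shj)
            + (1 - ((S.card : ℝ) + 1) / ((E.card : ℝ) + 1)) * v (insert i S) )
          - ( ((S.card : ℝ) / ((E.card : ℝ) + 1)) * (v (insert j S) - Shj)
            + (1 - (S.card : ℝ) / ((E.card : ℝ) + 1)) * v S ) )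
      = ((S.card.factorial : ℝ) * (((E.card - S.card).factorial : ℕ) : ℝ))
          / (((E.card + 1).factorial : ℕ) : ℝ) *
        ( (((S.card : ℝ) + 1) / ((E.card : ℝ) + 1)) * v (insert j (insert i S))
          + (1 - ((S.card : ℝ) + 1) / ((E.card : ℝ) + 1)) * v (insert i S)
          - ((S.card : ℝ) / ((E.card : ℝ) + 1)) * v (insert j S)
          - (1 - (S.card : ℝ) / ((E.card : ℝ) + 1)) * v S )
        - ((S.card.factorial : ℝ) * (((E.card - S.card).factorial : ℕ) : ℝ))
            / (((E.card + 1).factorial : ℕ) : ℝ) * ((1 / ((E.card : ℝ) + 1)) * Shj) := by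
    intro S hS
    ring
  rw [Finset.sum_congr rfl step1, Finset.sum_sub_distrib, ← Finset.sum_mul, sum_cprime E,
    one_mul, hJ, Finset.mul_sum, ← Finset.sum_sub_distrib]
  refine Finset.sum_congr rfl (fun S hS => ?_)
  have hSE : S ⊆ E := Finset.mem_powerset.1 hS
  have hScard : S.card ≤ E.card := Finset.card_le_card hSE
  obtain ⟨t, ht⟩ : ∃ t, E.card = S.card + t := ⟨E.card - S.card, by omega⟩
  have e1 : E.card + 1 - S.card = t + 1 := by omega
  have e2 : E.card - S.card = t := by omega
  rw [e1, e2, ht]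
  have hA : ((S.card.factorial : ℕ) : ℝ) ≠ 0 := Nat.cast_ne_zero.2 (Nat.factorial_ne_zero _)
  have hB : ((t.factorial : ℕ) : ℝ) ≠ 0 := Nat.cast_ne_zero.2 (Nat.factorial_ne_zero _)
  have hC : (((S.card + t).factorial : ℕ) : ℝ) ≠ 0 := Nat.cast_ne_zero.2 (Nat.factorial_ne_zero _)
  have f1 : ((S.card + 1).factorial : ℝ) = ((S.card : ℝ) + 1) * (S.card.factorial : ℝ) := by
    rw [Nat.factorial_succ]; push_cast; ring
  have f2 : (((t + 1).factorial : ℕ) : ℝ) = ((t : ℝ) + 1) * (t.factorial : ℝ) := by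
    rw [Nat.factorial_succ]; push_cast; ring
  have f3 : (((S.card + t + 1).factorial : ℕ) : ℝ)
      = ((S.card : ℝ) + t + 1) * ((S.card + t).factorial : ℝ) := by
    rw [Nat.factorial_succ]; push_cast; ring
  have f4 : (((S.card + t + 2).factorial : ℕ) : ℝ)
      = ((S.card : ℝ) + t + 2) * (((S.card : ℝ) + t + 1) * ((S.card + t).factorial : ℝ)) := by
    have : S.card + t + 2 = (S.card + t + 1) + 1 := rfl
    rw [this, Nat.factorial_succ]; push_cast [f3]; ring
  have h1 : ((S.card : ℝ) + t + 1) ≠ 0 := by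
    have h0 : (0:ℝ) ≤ (S.card : ℝ) := Nat.cast_nonneg _
    have h0' : (0:ℝ) ≤ (t : ℝ) := Nat.cast_nonneg _
    exact ne_of_gt (by linarith)
  have h2 : ((S.card : ℝ) + t + 2) ≠ 0 := by
    have h0 : (0:ℝ) ≤ (S.card : ℝ) := Nat.cast_nonneg _
    have h0' : (0:ℝ) ≤ (t : ℝ) := Nat.cast_nonneg _
    exact ne_of_gt (by linarith)
  rw [f1, f2, f3, f4]
  push_cast
  field_simp
  ring

end TUX

open TUX in
/-- The MPW solution satisfies Sobolev consistency for TUX games. -/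
theorem MPW_sobolev_consistent (N : Finset ℕ) (w : Game) (hw : IsTUX w)
    (i j : ℕ) (hi : i ∈ N) (hj : j ∈ N) (hij : i ≠ j) :
    MPW N w i = MPW (N.erase j) (sobRed N MPWsol w j) i := by
  exact shapley_consistent N (avg N w) (avg (N.erase j) (sobRed N MPWsol w j)) i j hi hj hij
    (fun S hS => avg_sobRed hj hS)
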